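/- arXiv:1102.1192 — 3 statements merged into one kernel-verified Lean document; each statement's English description precedes it below -/
import Mathlib

section
/- Fix 6 < q < 12 and define K*_q(α, β) = (α + β)^{-6/q} · (α²β² + (α+β)²)^{-3/4 + 3/q} for α, β > 0. Then ∫₀^∞ ∫₀^∞ K*_q(α, β) dα dβ < ∞. -/
open Set MeasureTheory

private lemma prod_integrableOn' {g h : ℝ → ℝ} {s t : Set ℝ}
    (hg : IntegrableOn g s) (hh : IntegrableOn h t) :
    IntegrableOn (fun p : ℝ × ℝ => g p.1 * h p.2) (s ×ˢ t) := by
  rw [IntegrableOn, Measure.volume_eq_prod, ← Measure.prod_restrict]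
  exact hg.mul_prod hh

private lemma aux_bound' {x y : ℝ} (t r : ℝ) (hx : 0 < x) (hy : 0 < y)
    (ht0 : 0 ≤ t) (ht1 : t ≤ 1) (hr : r ≤ 0) :
    (x + y) ^ r ≤ x ^ (t * r) * y ^ ((1 - t) * r) := by
  have hM : (0:ℝ) < max x y := lt_max_of_lt_left hx
  have h1 : x ^ t * y ^ (1 - t) ≤ x + y := by
    calc x ^ t * y ^ (1 - t) ≤ (max x y) ^ t * (max x y) ^ (1 - t) :=
          mul_le_mul (Real.rpow_le_rpow hx.le (le_max_left x y) ht0)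
            (Real.rpow_le_rpow hy.le (le_max_right x y) (by linarith))
            (by positivity) (by positivity)
      _ = (max x y) ^ (t + (1 - t)) := (Real.rpow_add hM _ _).symm
      _ = max x y := by norm_num
      _ ≤ x + y := max_le (le_add_of_nonneg_right hy.le) (le_add_of_nonneg_left hx.le)
  calc (x + y) ^ r ≤ (x ^ t * y ^ (1 - t)) ^ r :=
        Real.rpow_le_rpow_of_nonpos (by positivity) h1 hr
    _ = x ^ (t * r) * y ^ ((1 - t) * r) := by
        rw [Real.mul_rpow (by positivity) (by positivity), ← Real.rpow_mul hx.le,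
          ← Real.rpow_mul hy.le]

private lemma integrableOn_of_prod_bound' {K : ℝ × ℝ → ℝ} {g h : ℝ → ℝ} {s t : Set ℝ}
    (hK : Measurable K) (hs : MeasurableSet s) (ht : MeasurableSet t)
    (hg : IntegrableOn g s) (hh : IntegrableOn h t)
    (hnonneg : ∀ p ∈ s ×ˢ t, 0 ≤ K p)
    (hbd : ∀ p ∈ s ×ˢ t, K p ≤ g p.1 * h p.2) :
    IntegrableOn K (s ×ˢ t) := by
  refine (prod_integrableOn' hg hh).mono' hK.aestronglyMeasurable.restrict ?_
  filter_upwards [ae_restrict_mem (hs.prod ht)] with p hp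
  rw [Real.norm_eq_abs, abs_of_nonneg (hnonneg p hp)]
  exact hbd p hp

/-- For `6 < q < 12`, the kernel
`K*_q(α,β) = (α+β)^{-6/q} (α²β² + (α+β)²)^{-3/4+3/q}` is integrable over the
quadrant `(0,∞)²`. -/
theorem stmt3 (q : ℝ) (hq1 : 6 < q) (hq2 : q < 12) :
    IntegrableOn
      (fun p : ℝ × ℝ =>
        (p.1 + p.2) ^ (-6 / q : ℝ) *
          (p.1 ^ 2 * p.2 ^ 2 + (p.1 + p.2) ^ 2) ^ (-3 / 4 + 3 / q : ℝ))
      (Ioi (0 : ℝ) ×ˢ Ioi (0 : ℝ)) := by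
  have hq0 : (0:ℝ) < q := by linarith
  set a : ℝ := -6 / q with ha_def
  set b : ℝ := -3 / 4 + 3 / q with hb_def
  have h3q : 3 / q < 1 / 2 := by rw [div_lt_iff₀ hq0]; linarith
  have h3q' : 1 / 4 < 3 / q := by rw [lt_div_iff₀ hq0]; linarith
  have ha : a ≤ 0 := by
    rw [ha_def, neg_div]
    have : (0:ℝ) ≤ 6 / q := by positivity
    linarith
  have hb : b ≤ 0 := by rw [hb_def]; linarith
  have hab : a + 2 * b = -(3/2) := by
    rw [ha_def, hb_def]; field_simp; ring
  set c : ℝ := a / 2 + 2 * b with hc_def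
  have hc : c < -1 := by
    have : c = 3 / q - 3 / 2 := by rw [hc_def, ha_def, hb_def]; field_simp; ring
    rw [this]; linarith
  set K : ℝ × ℝ → ℝ := fun p =>
    (p.1 + p.2) ^ a * (p.1 ^ 2 * p.2 ^ 2 + (p.1 + p.2) ^ 2) ^ b with hK_def
  have hKmeas : Measurable K := by
    rw [hK_def]; fun_prop
  have hKnonneg : ∀ p : ℝ × ℝ, 0 < p.1 → 0 < p.2 → 0 ≤ K p := by
    intro p h1 h2
    have : (0:ℝ) < p.1 + p.2 := by linarith
    positivity
  -- Bound 1: K p ≤ (α+β)^(-(3/2)) for α, β > 0.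
  have hbound1 : ∀ p : ℝ × ℝ, 0 < p.1 → 0 < p.2 → K p ≤ (p.1 + p.2) ^ (-(3/2) : ℝ) := by
    intro p h1 h2
    obtain ⟨α, β⟩ := p
    simp only at h1 h2 ⊢
    have hs : (0:ℝ) < α + β := by linarith
    have hD : (α + β) ^ 2 ≤ α ^ 2 * β ^ 2 + (α + β) ^ 2 := le_add_of_nonneg_left (by positivity)
    have e1 : (α ^ 2 * β ^ 2 + (α + β) ^ 2) ^ b ≤ ((α + β) ^ 2) ^ b :=
      Real.rpow_le_rpow_of_nonpos (by positivity) hD hb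
    have e2 : ((α + β) ^ 2) ^ b = (α + β) ^ (2 * b) := by
      rw [← Real.rpow_natCast (α + β) 2, ← Real.rpow_mul hs.le]
      norm_num
    calc K (α, β) ≤ (α + β) ^ a * ((α + β) ^ 2) ^ b := by
          exact mul_le_mul_of_nonneg_left e1 (by positivity)
      _ = (α + β) ^ (a + 2 * b) := by rw [e2, ← Real.rpow_add hs]
      _ = (α + β) ^ (-(3/2) : ℝ) := by rw [hab]
  -- Bound via products x^(t*(-3/2)) * y^((1-t)*(-3/2))
  have hbound1' : ∀ (t : ℝ), 0 ≤ t → t ≤ 1 → ∀ p : ℝ × ℝ, 0 < p.1 → 0 < p.2 →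
      K p ≤ p.1 ^ (t * (-(3/2)) : ℝ) * p.2 ^ ((1 - t) * (-(3/2)) : ℝ) := by
    intro t ht0 ht1 p h1 h2
    exact (hbound1 p h1 h2).trans (aux_bound' t (-(3/2)) h1 h2 ht0 ht1 (by norm_num))
  -- Bound 2: K p ≤ α^c * β^c for α, β > 0.
  have hbound2 : ∀ p : ℝ × ℝ, 0 < p.1 → 0 < p.2 → K p ≤ p.1 ^ c * p.2 ^ c := by
    intro p h1 h2
    obtain ⟨α, β⟩ := p
    simp only at h1 h2 ⊢
    have hs : (0:ℝ) < α + β := by linarith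
    have e1 : (α + β) ^ a ≤ α ^ ((1/2 : ℝ) * a) * β ^ ((1/2 : ℝ) * a) := by
      have := aux_bound' (1/2) a h1 h2 (by norm_num) (by norm_num) ha
      norm_num at this ⊢
      convert this using 3 <;> ring
    have hD : α ^ 2 * β ^ 2 ≤ α ^ 2 * β ^ 2 + (α + β) ^ 2 := le_add_of_nonneg_right (by positivity)
    have e2 : (α ^ 2 * β ^ 2 + (α + β) ^ 2) ^ b ≤ α ^ (2 * b) * β ^ (2 * b) := by
      have h' : (α ^ 2 * β ^ 2 + (α + β) ^ 2) ^ b ≤ (α ^ 2 * β ^ 2) ^ b :=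
        Real.rpow_le_rpow_of_nonpos (by positivity) hD hb
      have h'' : (α ^ 2 * β ^ 2 : ℝ) ^ b = α ^ (2 * b) * β ^ (2 * b) := by
        rw [Real.mul_rpow (by positivity) (by positivity),
          ← Real.rpow_natCast α 2, ← Real.rpow_natCast β 2,
          ← Real.rpow_mul h1.le, ← Real.rpow_mul h2.le]
        norm_num
      rw [← h'']; exact h'
    calc K (α, β) ≤ (α ^ ((1/2 : ℝ) * a) * β ^ ((1/2 : ℝ) * a)) * (α ^ (2 * b) * β ^ (2 * b)) :=
          mul_le_mul e1 e2 (by positivity) (by positivity)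
      _ = (α ^ ((1/2 : ℝ) * a) * α ^ (2 * b)) * (β ^ ((1/2 : ℝ) * a) * β ^ (2 * b)) := by ring
      _ = α ^ c * β ^ c := by
          rw [← Real.rpow_add h1, ← Real.rpow_add h2,
            show (1/2 : ℝ) * a + 2 * b = c by rw [hc_def]; ring]
  -- 1D integrability facts
  have int_small : ∀ r : ℝ, -1 < r → IntegrableOn (fun x : ℝ => x ^ r) (Ioc (0:ℝ) 2) := by
    intro r hr
    exact (intervalIntegral.intervalIntegrable_rpow' (a := 0) (b := 2) hr).1
  have int_big : ∀ r : ℝ, r < -1 → IntegrableOn (fun x : ℝ => x ^ r) (Ioi (2:ℝ)) :=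
    fun r hr => integrableOn_Ioi_rpow_of_lt hr two_pos
  -- the four pieces
  have hR1 : IntegrableOn K (Ioc (0:ℝ) 2 ×ˢ Ioc (0:ℝ) 2) := by
    refine integrableOn_of_prod_bound' hKmeas measurableSet_Ioc measurableSet_Ioc
      (int_small (-(3/4)) (by norm_num)) (int_small (-(3/4)) (by norm_num))
      (fun p hp => hKnonneg p hp.1.1 hp.2.1) (fun p hp => ?_)
    have := hbound1' (1/2) (by norm_num) (by norm_num) p hp.1.1 hp.2.1
    norm_num at this ⊢
    convert this using 3 <;> ring
  have hR2 : IntegrableOn K (Ioc (0:ℝ) 2 ×ˢ Ioi (2:ℝ)) := by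
    refine integrableOn_of_prod_bound' hKmeas measurableSet_Ioc measurableSet_Ioi
      (int_small (-(1/4)) (by norm_num)) (int_big (-(5/4)) (by norm_num))
      (fun p hp => hKnonneg p hp.1.1 (by have := hp.2; simp only [mem_Ioi] at this; linarith))
      (fun p hp => ?_)
    have h2 : (0:ℝ) < p.2 := by have := hp.2; simp only [mem_Ioi] at this; linarith
    have := hbound1' (1/6) (by norm_num) (by norm_num) p hp.1.1 h2
    norm_num at this ⊢
    convert this using 3 <;> ring
  have hR3 : IntegrableOn K (Ioi (2:ℝ) ×ˢ Ioc (0:ℝ) 2) := by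
    refine integrableOn_of_prod_bound' hKmeas measurableSet_Ioi measurableSet_Ioc
      (int_big (-(5/4)) (by norm_num)) (int_small (-(1/4)) (by norm_num))
      (fun p hp => hKnonneg p (by have := hp.1; simp only [mem_Ioi] at this; linarith) hp.2.1)
      (fun p hp => ?_)
    have h1 : (0:ℝ) < p.1 := by have := hp.1; simp only [mem_Ioi] at this; linarith
    have := hbound1' (5/6) (by norm_num) (by norm_num) p h1 hp.2.1
    norm_num at this ⊢
    convert this using 3 <;> ring
  have hR4 : IntegrableOn K (Ioi (2:ℝ) ×ˢ Ioi (2:ℝ)) := by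
    refine integrableOn_of_prod_bound' hKmeas measurableSet_Ioi measurableSet_Ioi
      (int_big c hc) (int_big c hc)
      (fun p hp => hKnonneg p (by have := hp.1; simp only [mem_Ioi] at this; linarith)
        (by have := hp.2; simp only [mem_Ioi] at this; linarith))
      (fun p hp => hbound2 p (by have := hp.1; simp only [mem_Ioi] at this; linarith)
        (by have := hp.2; simp only [mem_Ioi] at this; linarith))
  have hsub : Ioi (0:ℝ) ×ˢ Ioi (0:ℝ) ⊆
      ((Ioc (0:ℝ) 2 ×ˢ Ioc (0:ℝ) 2) ∪ (Ioc (0:ℝ) 2 ×ˢ Ioi (2:ℝ))) ∪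
        ((Ioi (2:ℝ) ×ˢ Ioc (0:ℝ) 2) ∪ (Ioi (2:ℝ) ×ˢ Ioi (2:ℝ))) := by
    rintro ⟨α, β⟩ ⟨hα, hβ⟩
    simp only [mem_Ioi] at hα hβ
    simp only [mem_union, mem_prod, mem_Ioc, mem_Ioi]
    rcases le_or_gt α 2 with h1 | h1 <;> rcases le_or_gt β 2 with h2 | h2 <;> tauto
  exact ((hR1.union hR2).union (hR3.union hR4)).mono_set hsub
end

section
/- Compute the Gaussian-modulated oscillatory integral: for s, τ > 0, R > 0, and x, y, z ∈ ℝ³, the kernel K(τ,z;s,y;x) = ∫_{ℝ³} (4πiτ)^{-3/2}(4πis)^{-3/2}(πR²)^{-3/2} exp{ i|z−x′|²/(4τ) − |x′−x|²/R² + i|x′−y|²/(4s) } dx′ satisfies |K| = (2π)^{-3} [16s²τ² + R⁴(s+τ)²]^{-3/4} exp{ − R²(s+τ)² |x − x*|² / (16s²τ² + R⁴(s+τ)²) }, where x* = (sz + τy)/(s+τ). -/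
open Real MeasureTheory

open Complex in
theorem aux_int {ι : Type*} [Fintype ι] {b : ℂ} (hb : 0 < b.re) (c : ι → ℂ) :
    ∫ v : EuclideanSpace ℝ ι, Complex.exp (-b * ‖v‖ ^ 2 + ∑ i, c i * (v i : ℂ)) =
      (↑π / b) ^ (Fintype.card ι / 2 : ℂ) * Complex.exp ((∑ i, c i ^ 2) / (4 * b)) := by
  have := (EuclideanSpace.volume_preserving_symm_measurableEquiv_toLp ι).symm
  rw [← this.integral_comp (MeasurableEquiv.measurableEmbedding _)]
  simp only [neg_mul, Function.comp_def]
  convert GaussianFourier.integral_cexp_neg_mul_sum_add hb c using 3 with v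
  case e'_5 => rfl
  simp only [MeasurableEquiv.symm_symm, MeasurableEquiv.coe_toLp,
    EuclideanSpace.norm_eq, Real.norm_eq_abs, sq_abs]
  congr 2
  rw [← Complex.ofReal_pow, Real.sq_sqrt (Finset.sum_nonneg fun i _ => by positivity)]
  simp [← Complex.ofReal_pow, sq_abs]

set_option maxHeartbeats 1000000 in
/-- Explicit evaluation of the Gaussian-modulated oscillatory integral appearing
in the double Duhamel estimate: the modulus of
`∫ (4πiτ)^{-3/2}(4πis)^{-3/2}(πR²)^{-3/2} exp(i|z−x′|²/4τ − |x′−x|²/R² + i|x′−y|²/4s) dx′`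
equals `(2π)^{-3}[16s²τ²+R⁴(s+τ)²]^{-3/4} exp(−R²(s+τ)²|x−x*|²/(16s²τ²+R⁴(s+τ)²))`
with `x* = (sz+τy)/(s+τ)`. -/
theorem stmt13 (s τ R : ℝ) (hs : 0 < s) (hτ : 0 < τ) (hR : 0 < R)
    (x y z : EuclideanSpace ℝ (Fin 3)) :
    ‖∫ x' : EuclideanSpace ℝ (Fin 3),
        (4 * (π : ℂ) * Complex.I * (τ : ℂ)) ^ (-(3 : ℂ) / 2) *
          (4 * (π : ℂ) * Complex.I * (s : ℂ)) ^ (-(3 : ℂ) / 2) *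
          ((π : ℂ) * (R : ℂ) ^ 2) ^ (-(3 : ℂ) / 2) *
          Complex.exp
            (Complex.I * ((‖z - x'‖ : ℝ) ^ 2 : ℂ) / (4 * (τ : ℂ)) -
              ((‖x' - x‖ : ℝ) ^ 2 : ℂ) / (R : ℂ) ^ 2 +
              Complex.I * ((‖x' - y‖ : ℝ) ^ 2 : ℂ) / (4 * (s : ℂ)))‖
      = (2 * π) ^ (-(3 : ℝ)) *
          (16 * s ^ 2 * τ ^ 2 + R ^ 4 * (s + τ) ^ 2) ^ (-(3 : ℝ) / 4) *
          Real.exp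
            (-(R ^ 2 * (s + τ) ^ 2 * ‖x - (s + τ)⁻¹ • (s • z + τ • y)‖ ^ 2) /
              (16 * s ^ 2 * τ ^ 2 + R ^ 4 * (s + τ) ^ 2)) := by
  have hst : 0 < s + τ := by linarith
  have hRs : (0:ℝ) < R ^ 2 := by positivity
  have hsne : (s:ℂ) ≠ 0 := Complex.ofReal_ne_zero.mpr hs.ne'
  have hτne : (τ:ℂ) ≠ 0 := Complex.ofReal_ne_zero.mpr hτ.ne'
  have hRne : (R:ℂ) ≠ 0 := Complex.ofReal_ne_zero.mpr hR.ne'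
  set D : ℝ := 16 * s ^ 2 * τ ^ 2 + R ^ 4 * (s + τ) ^ 2 with hDdef
  have hD : 0 < D := by positivity
  -- real atoms
  set X : ℝ := ∑ i, x i ^ 2 with hXdef
  set Y : ℝ := ∑ i, y i ^ 2 with hYdef
  set Z : ℝ := ∑ i, z i ^ 2 with hZdef
  set A1 : ℝ := ∑ i, x i * y i with hA1def
  set A2 : ℝ := ∑ i, x i * z i with hA2def
  set A3 : ℝ := ∑ i, y i * z i with hA3def
  -- complex parameters
  set a : ℝ := 1 / R ^ 2 with hadef
  set m : ℝ := (s + τ) / (4 * s * τ) with hmdef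
  set b : ℂ := (a : ℂ) - Complex.I * (m : ℂ) with hbdef
  have hbre : 0 < b.re := by
    simp only [hbdef, Complex.sub_re, Complex.ofReal_re, Complex.mul_re, Complex.I_re,
      Complex.I_im, Complex.ofReal_im]
    simpa using by positivity
  set p : EuclideanSpace ℝ (Fin 3) := (2 / R ^ 2) • x with hpdef
  set q : EuclideanSpace ℝ (Fin 3) := (1 / (2 * τ)) • z + (1 / (2 * s)) • y with hqdef
  set c : Fin 3 → ℂ := fun i => (p i : ℂ) - Complex.I * (q i : ℂ) with hcdef
  set d : ℂ := ((-X / R ^ 2 : ℝ) : ℂ) + Complex.I * ((Z / (4 * τ) + Y / (4 * s) : ℝ) : ℂ)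
    with hddef
  have hpc : ∀ i, p i = 2 / R ^ 2 * x i := fun i => rfl
  have hqc : ∀ i, q i = 1 / (2 * τ) * z i + 1 / (2 * s) * y i := fun i => rfl
  -- squared norm in coordinates
  have nsq : ∀ v : EuclideanSpace ℝ (Fin 3), ‖v‖ ^ 2 = ∑ i, v i ^ 2 := by
    intro v
    rw [EuclideanSpace.norm_eq, Real.sq_sqrt (Finset.sum_nonneg fun i _ => by positivity)]
    simp [Real.norm_eq_abs, sq_abs]
  have expand : ∀ u w : EuclideanSpace ℝ (Fin 3),
      ‖u - w‖ ^ 2 = (∑ i, u i ^ 2) - 2 * (∑ i, u i * w i) + ∑ i, w i ^ 2 := by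
    intro u w
    rw [nsq, Finset.mul_sum, ← Finset.sum_sub_distrib, ← Finset.sum_add_distrib]
    refine Finset.sum_congr rfl fun i _ => ?_
    have : (u - w) i = u i - w i := rfl
    rw [this]; ring
  -- linear term in coordinates
  have hcv : ∀ v : EuclideanSpace ℝ (Fin 3),
      (∑ i, c i * (v i : ℂ)) =
        ((2 / R ^ 2 * ∑ i, x i * v i : ℝ) : ℂ) -
          Complex.I * ((1 / (2 * τ) * ∑ i, z i * v i + 1 / (2 * s) * ∑ i, y i * v i : ℝ) : ℂ) := by
    intro v
    have h1 : ∀ i, c i * (v i : ℂ) =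
        ((2 / R ^ 2 * (x i * v i) : ℝ) : ℂ) -
          Complex.I * ((1 / (2 * τ) * (z i * v i) + 1 / (2 * s) * (y i * v i) : ℝ) : ℂ) := by
      intro i
      rw [hcdef]
      simp only [hpc, hqc]
      push_cast
      ring
    have r1 : (∑ i, 2 / R ^ 2 * (x i * v i)) = 2 / R ^ 2 * ∑ i, x i * v i := by
      rw [Finset.mul_sum]
    have r2 : (∑ i, (1 / (2 * τ) * (z i * v i) + 1 / (2 * s) * (y i * v i))) =
        1 / (2 * τ) * ∑ i, z i * v i + 1 / (2 * s) * ∑ i, y i * v i := by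
      rw [Finset.sum_add_distrib, Finset.mul_sum, Finset.mul_sum]
    rw [Finset.sum_congr rfl fun i _ => h1 i, Finset.sum_sub_distrib, ← Finset.mul_sum,
      ← Complex.ofReal_sum, ← Complex.ofReal_sum, r1, r2]
  -- pointwise exponent identity
  have key : ∀ v : EuclideanSpace ℝ (Fin 3),
      Complex.I * ((‖z - v‖ : ℝ) ^ 2 : ℂ) / (4 * (τ : ℂ)) -
          ((‖v - x‖ : ℝ) ^ 2 : ℂ) / (R : ℂ) ^ 2 +
          Complex.I * ((‖v - y‖ : ℝ) ^ 2 : ℂ) / (4 * (s : ℂ)) =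
        d + (-b * ((‖v‖ : ℝ) ^ 2 : ℂ) + ∑ i, c i * (v i : ℂ)) := by
    intro v
    rw [hcv v, hddef, hbdef]
    have e1 := expand z v
    have e2 := expand v x
    have e3 := expand v y
    simp only [← Complex.ofReal_pow]
    rw [show ((‖z - v‖:ℝ) ^ 2 : ℝ) = Z - 2 * (∑ i, z i * v i) + ∑ i, v i ^ 2 from e1,
        show ((‖v - x‖:ℝ) ^ 2 : ℝ) = (∑ i, v i ^ 2) - 2 * (∑ i, v i * x i) + X from e2,
        show ((‖v - y‖:ℝ) ^ 2 : ℝ) = (∑ i, v i ^ 2) - 2 * (∑ i, v i * y i) + Y from e3,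
        nsq v]
    have hxv : (∑ i, v i * x i) = ∑ i, x i * v i :=
      Finset.sum_congr rfl fun i _ => mul_comm _ _
    have hyv : (∑ i, v i * y i) = ∑ i, y i * v i :=
      Finset.sum_congr rfl fun i _ => mul_comm _ _
    rw [hxv, hyv, hadef, hmdef]
    push_cast
    field_simp [hsne, hτne, hRne]
    ring_nf
  have hbne : b ≠ 0 := fun h => by simp [h] at hbre
  -- sum of squares of c
  set u : ℝ := 4 / R ^ 4 * X - (1 / (4 * τ ^ 2) * Z + 1 / (4 * s ^ 2) * Y + 1 / (2 * s * τ) * A3)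
    with hudef
  set w : ℝ := 1 / (R ^ 2 * τ) * A2 + 1 / (R ^ 2 * s) * A1 with hwdef
  have hS : (∑ i, c i ^ 2) = (u : ℂ) - 2 * Complex.I * (w : ℂ) := by
    have h1 : ∀ i : Fin 3, c i ^ 2 =
        ((p i ^ 2 - q i ^ 2 : ℝ) : ℂ) - 2 * Complex.I * ((p i * q i : ℝ) : ℂ) := by
      intro i
      rw [hcdef]
      push_cast
      linear_combination ((q i : ℂ)) ^ 2 * Complex.I_sq
    rw [Finset.sum_congr rfl fun i _ => h1 i, Finset.sum_sub_distrib, ← Finset.mul_sum,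
      ← Complex.ofReal_sum, ← Complex.ofReal_sum]
    have r1 : (∑ i, (p i ^ 2 - q i ^ 2)) = u := by
      rw [hudef, hXdef, hYdef, hZdef, hA3def]
      simp only [Finset.mul_sum, ← Finset.sum_add_distrib, ← Finset.sum_sub_distrib]
      refine Finset.sum_congr rfl fun i _ => ?_
      simp only [hpc, hqc]
      field_simp
      ring
    have r2 : (∑ i, p i * q i) = w := by
      rw [hwdef, hA1def, hA2def]
      simp only [Finset.mul_sum, ← Finset.sum_add_distrib]
      refine Finset.sum_congr rfl fun i _ => ?_
      simp only [hpc, hqc]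
      field_simp
    rw [r1, r2]
  -- evaluate the integral
  have hint : (∫ x' : EuclideanSpace ℝ (Fin 3),
        (4 * (π : ℂ) * Complex.I * (τ : ℂ)) ^ (-(3 : ℂ) / 2) *
          (4 * (π : ℂ) * Complex.I * (s : ℂ)) ^ (-(3 : ℂ) / 2) *
          ((π : ℂ) * (R : ℂ) ^ 2) ^ (-(3 : ℂ) / 2) *
          Complex.exp
            (Complex.I * ((‖z - x'‖ : ℝ) ^ 2 : ℂ) / (4 * (τ : ℂ)) -
              ((‖x' - x‖ : ℝ) ^ 2 : ℂ) / (R : ℂ) ^ 2 +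
              Complex.I * ((‖x' - y‖ : ℝ) ^ 2 : ℂ) / (4 * (s : ℂ)))) =
      ((4 * (π : ℂ) * Complex.I * (τ : ℂ)) ^ (-(3 : ℂ) / 2) *
          (4 * (π : ℂ) * Complex.I * (s : ℂ)) ^ (-(3 : ℂ) / 2) *
          ((π : ℂ) * (R : ℂ) ^ 2) ^ (-(3 : ℂ) / 2) * Complex.exp d) *
        (((π : ℂ) / b) ^ ((Fintype.card (Fin 3) : ℂ) / 2) *
          Complex.exp ((∑ i, c i ^ 2) / (4 * b))) := by
    rw [← aux_int hbre c, ← integral_const_mul]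
    refine integral_congr_ae (Filter.Eventually.of_forall fun v => ?_)
    beta_reduce
    rw [key v, Complex.exp_add]
    ring
  rw [hint]
  -- absolute values
  have habs32 : ∀ g : ℂ, g ≠ 0 →
      ‖g ^ (-(3 : ℂ) / 2)‖ = ‖g‖ ^ (-(3 / 2) : ℝ) := by
    intro g hg
    rw [show (-(3 : ℂ) / 2) = ((-(3 / 2) : ℝ) : ℂ) by norm_num, Complex.norm_cpow_real]
  have hπbne : ((π : ℂ) / b) ≠ 0 :=
    div_ne_zero (Complex.ofReal_ne_zero.mpr Real.pi_ne_zero) hbne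
  have habs32' : ‖((π : ℂ) / b) ^ ((Fintype.card (Fin 3) : ℂ) / 2)‖ =
      ‖(π : ℂ) / b‖ ^ ((3 / 2 : ℝ)) := by
    rw [show ((Fintype.card (Fin 3) : ℂ) / 2) = (((3 / 2 : ℝ)) : ℂ) by norm_num,
      Complex.norm_cpow_real]
  have hne1 : (4 * (π : ℂ) * Complex.I * (τ : ℂ)) ≠ 0 := by
    refine mul_ne_zero (mul_ne_zero (mul_ne_zero ?_ ?_) Complex.I_ne_zero) hτne <;>
      simp [Real.pi_ne_zero]
  have hne2 : (4 * (π : ℂ) * Complex.I * (s : ℂ)) ≠ 0 := by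
    refine mul_ne_zero (mul_ne_zero (mul_ne_zero ?_ ?_) Complex.I_ne_zero) hsne <;>
      simp [Real.pi_ne_zero]
  have hne3 : ((π : ℂ) * (R : ℂ) ^ 2) ≠ 0 := by
    refine mul_ne_zero ?_ (pow_ne_zero _ hRne)
    simp [Real.pi_ne_zero]
  have ha1 : ‖4 * (π : ℂ) * Complex.I * (τ : ℂ)‖ = 4 * π * τ := by
    simp [norm_mul, Complex.norm_real, Complex.norm_I, abs_of_pos Real.pi_pos, abs_of_pos hτ]
  have ha2 : ‖4 * (π : ℂ) * Complex.I * (s : ℂ)‖ = 4 * π * s := by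
    simp [norm_mul, Complex.norm_real, Complex.norm_I, abs_of_pos Real.pi_pos, abs_of_pos hs]
  have ha3 : ‖(π : ℂ) * (R : ℂ) ^ 2‖ = π * R ^ 2 := by
    simp [norm_mul, norm_pow, Complex.norm_real, abs_of_pos Real.pi_pos, abs_of_pos hR]
  have habsb : ‖b‖ = Real.sqrt D / (4 * s * τ * R ^ 2) := by
    have hbreq : b.re = a := by simp [hbdef]
    have hbim : b.im = -m := by simp [hbdef]
    rw [Complex.norm_def, Complex.normSq_apply, hbreq, hbim,
      show a * a + -m * -m = D / (4 * s * τ * R ^ 2) ^ 2 by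
        rw [hadef, hmdef, hDdef]; field_simp; ring,
      Real.sqrt_div' D (by positivity), Real.sqrt_sq (by positivity)]
  have hdre : d.re = -X / R ^ 2 := by
    rw [hddef]
    simp only [Complex.add_re, Complex.mul_re, Complex.I_re, Complex.I_im, Complex.ofReal_re,
      Complex.ofReal_im]
    ring
  have hQre : ((∑ i, c i ^ 2) / (4 * b)).re = (u * a + 2 * w * m) / (4 * (a ^ 2 + m ^ 2)) := by
    rw [hS, hbdef]
    simp only [Complex.div_re, Complex.normSq_apply, Complex.sub_re, Complex.sub_im,
      Complex.mul_re, Complex.mul_im, Complex.I_re, Complex.I_im, Complex.ofReal_re,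
      Complex.ofReal_im, Complex.re_ofNat, Complex.im_ofNat]
    have hapos : 0 < a := by rw [hadef]; positivity
    have ham : 0 < a ^ 2 + m ^ 2 := add_pos_of_pos_of_nonneg (pow_pos hapos 2) (sq_nonneg m)
    field_simp [ham.ne']
    have h16 : a ^ 2 * 16 + m ^ 2 * 16 ≠ 0 := by positivity
    ring_nf
    field_simp
    ring
  -- expand the target norm
  have hNn : ‖x - (s + τ)⁻¹ • (s • z + τ • y)‖ ^ 2 =
      X - 2 / (s + τ) * (s * A2 + τ * A1) +
        1 / (s + τ) ^ 2 * (s ^ 2 * Z + 2 * s * τ * A3 + τ ^ 2 * Y) := by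
    have hco : ∀ i, (x - (s + τ)⁻¹ • (s • z + τ • y)) i
        = x i - (s + τ)⁻¹ * (s * z i + τ * y i) := fun i => rfl
    rw [nsq]
    simp only [hco]
    rw [hXdef, hYdef, hZdef, hA1def, hA2def, hA3def]
    simp only [Finset.mul_sum, mul_add, ← mul_assoc, Finset.mul_sum,
      ← Finset.sum_add_distrib, ← Finset.sum_sub_distrib]
    refine Finset.sum_congr rfl fun i _ => ?_
    field_simp
    ring
  have hexps : -X / R ^ 2 + (u * a + 2 * w * m) / (4 * (a ^ 2 + m ^ 2)) =
      -(R ^ 2 * (s + τ) ^ 2 * ‖x - (s + τ)⁻¹ • (s • z + τ • y)‖ ^ 2) / D := by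
    rw [hNn, hudef, hwdef, hadef, hmdef, hDdef]
    field_simp
    ring
  have hsqD : Real.sqrt D ≠ 0 := (Real.sqrt_pos.mpr hD).ne'
  have hpre : (4 * π * τ) ^ (-(3 / 2) : ℝ) * (4 * π * s) ^ (-(3 / 2) : ℝ) *
      (π * R ^ 2) ^ (-(3 / 2) : ℝ) *
      (π / (Real.sqrt D / (4 * s * τ * R ^ 2))) ^ ((3 / 2) : ℝ) =
      (2 * π) ^ (-(3 : ℝ)) * D ^ (-(3 : ℝ) / 4) := by
    have h1 : (0:ℝ) < 4 * π * τ := by positivity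
    have h2 : (0:ℝ) < 4 * π * s := by positivity
    have h3 : (0:ℝ) < π * R ^ 2 := by positivity
    have e1 : π / (Real.sqrt D / (4 * s * τ * R ^ 2)) = π * (4 * s * τ * R ^ 2) / Real.sqrt D := by
      field_simp
    have h4 : (0:ℝ) < π / (Real.sqrt D / (4 * s * τ * R ^ 2)) := by
      rw [e1]; positivity
    rw [Real.rpow_def_of_pos h1, Real.rpow_def_of_pos h2, Real.rpow_def_of_pos h3,
      Real.rpow_def_of_pos h4, Real.rpow_def_of_pos (by positivity : (0:ℝ) < 2 * π),
      Real.rpow_def_of_pos hD, ← Real.exp_add, ← Real.exp_add, ← Real.exp_add, ← Real.exp_add]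
    congr 1
    have l1 : Real.log (4 * π * τ) = Real.log 4 + Real.log π + Real.log τ := by
      rw [Real.log_mul (by positivity) hτ.ne', Real.log_mul (by norm_num) Real.pi_ne_zero]
    have l2 : Real.log (4 * π * s) = Real.log 4 + Real.log π + Real.log s := by
      rw [Real.log_mul (by positivity) hs.ne', Real.log_mul (by norm_num) Real.pi_ne_zero]
    have l3 : Real.log (π * R ^ 2) = Real.log π + 2 * Real.log R := by
      rw [Real.log_mul Real.pi_ne_zero (by positivity), Real.log_pow]
      push_cast; ring
    have l4 : Real.log (π / (Real.sqrt D / (4 * s * τ * R ^ 2))) =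
        Real.log π + (Real.log 4 + Real.log s + Real.log τ + 2 * Real.log R)
          - Real.log D / 2 := by
      rw [e1, Real.log_div (by positivity) hsqD, Real.log_mul Real.pi_ne_zero (by positivity),
        Real.log_sqrt hD.le,
        Real.log_mul (by positivity) (by positivity : (R:ℝ) ^ 2 ≠ 0),
        Real.log_mul (by positivity) hτ.ne', Real.log_mul (by norm_num) hs.ne', Real.log_pow]
      push_cast; ring
    have l5 : Real.log (2 * π) = Real.log 2 + Real.log π :=
      Real.log_mul (by norm_num) Real.pi_ne_zero
    have l6 : Real.log 4 = 2 * Real.log 2 := by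
      rw [show (4:ℝ) = 2 ^ 2 by norm_num, Real.log_pow]; push_cast; ring
    rw [l1, l2, l3, l4, l5, l6]
    ring
  -- put everything together
  simp only [norm_mul, Complex.norm_exp]
  rw [habs32 _ hne1, habs32 _ hne2, habs32 _ hne3, habs32', ha1, ha2, ha3, hdre, hQre,
    norm_div, Complex.norm_real, Real.norm_eq_abs, abs_of_pos Real.pi_pos, habsb]
  rw [show ∀ p1 p2 p3 e1 p4 e2 : ℝ, p1 * p2 * p3 * e1 * (p4 * e2)
      = p1 * p2 * p3 * p4 * (e1 * e2) from fun _ _ _ _ _ _ => by ring,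
    ← Real.exp_add, hexps, hpre]
end

section
/- Suppose A, Ã : 2^ℤ → [0,∞) satisfy: (i) A(N) + Ã(N) ≤ C₁ N^{3/2} K^{1/2} for all N ≥ N₀ (for some fixed N₀ ∈ 2^ℤ, C₁ ≥ 1, K > 0); (ii) the recurrence A(N) ≤ C₂(1 + c^{-3/2} N^{3/2} K^{1/2}) + η² Ã(2N) and Ã(N) ≤ C₂(1 + c^{-3/2} N^{3/2} K^{1/2}) + η A(N) + η² Ã(2N) for all N ∈ 2^ℤ, with constants C₂ ≥ 1, c > 0; (iii) A(N), Ã(N) < ∞ for all N. Then if η > 0 is sufficiently small (depending only on C₂), there is a constant C (depending on C₁, C₂, c, N₀) such that A(N) + Ã(N) ≤ C(1 + N^{3/2} K^{1/2}) for all N ∈ 2^ℤ. -/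
set_option maxHeartbeats 1000000 in
/-- Abstract downward induction on dyadic frequencies (`N = 2^n`) used for the
long-time Strichartz estimate: a high-frequency base case plus a recurrence
with small coefficient `η` yields `A(N) + Ã(N) ≤ C(1 + N^{3/2}K^{1/2})` for all
`N ∈ 2^ℤ`, provided `η` is small enough depending only on `C₂`.
Here `A` plays the role of `A(2^n)` and `A'` that of `Ã(2^n)`. -/
theorem stmt17 (C₂ : ℝ) (hC₂ : 1 ≤ C₂) :
    ∃ η₀ > 0, ∀ η : ℝ, 0 < η → η ≤ η₀ →
      ∀ (C₁ c K : ℝ) (N₀ : ℤ), 1 ≤ C₁ → 0 < c → 0 < K →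
        ∀ A A' : ℤ → ℝ, (∀ n, 0 ≤ A n) → (∀ n, 0 ≤ A' n) →
          (∀ n : ℤ, N₀ ≤ n →
            A n + A' n ≤ C₁ * ((2 : ℝ) ^ n) ^ (3 / 2 : ℝ) * K ^ (1 / 2 : ℝ)) →
          (∀ n : ℤ,
            A n ≤ C₂ * (1 + c ^ (-(3 : ℝ) / 2) * ((2 : ℝ) ^ n) ^ (3 / 2 : ℝ) *
              K ^ (1 / 2 : ℝ)) + η ^ 2 * A' (n + 1)) →
          (∀ n : ℤ,
            A' n ≤ C₂ * (1 + c ^ (-(3 : ℝ) / 2) * ((2 : ℝ) ^ n) ^ (3 / 2 : ℝ) *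
              K ^ (1 / 2 : ℝ)) + η * A n + η ^ 2 * A' (n + 1)) →
          ∃ C : ℝ, ∀ n : ℤ,
            A n + A' n ≤ C * (1 + ((2 : ℝ) ^ n) ^ (3 / 2 : ℝ) * K ^ (1 / 2 : ℝ)) := by
  refine ⟨1/4, by norm_num, ?_⟩
  intro η hη hη4 C₁ c K N₀ hC₁ hc hK A A' hA0 hA'0 hbase hrecA hrecA'
  obtain ⟨g, hg⟩ : ∃ g : ℤ → ℝ, ∀ n : ℤ,
      g n = 1 + ((2 : ℝ) ^ n) ^ (3 / 2 : ℝ) * K ^ (1 / 2 : ℝ) := ⟨_, fun _ => rfl⟩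
  have hterm : ∀ n : ℤ, 0 ≤ ((2 : ℝ) ^ n) ^ (3 / 2 : ℝ) * K ^ (1 / 2 : ℝ) := by
    intro n; positivity
  have hgpos : ∀ n, 0 < g n := by
    intro n; have := hterm n; rw [hg n]; linarith
  have hgsucc : ∀ n, g (n + 1) ≤ 4 * g n := by
    intro n
    have h2 : ((2 : ℝ) ^ (n + 1)) = 2 * (2 : ℝ) ^ n := by
      rw [zpow_add_one₀ (by norm_num)]; ring
    have hx : (0 : ℝ) ≤ (2 : ℝ) ^ n := by positivity
    have hm : ((2 : ℝ) ^ (n + 1)) ^ (3 / 2 : ℝ)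
        = (2 : ℝ) ^ (3 / 2 : ℝ) * ((2 : ℝ) ^ n) ^ (3 / 2 : ℝ) := by
      rw [h2, Real.mul_rpow (by norm_num) hx]
    have h23 : (2 : ℝ) ^ (3 / 2 : ℝ) ≤ 4 := by
      calc (2 : ℝ) ^ (3 / 2 : ℝ) ≤ (2 : ℝ) ^ (2 : ℝ) :=
            Real.rpow_le_rpow_of_exponent_le (by norm_num) (by norm_num)
        _ = 4 := by
            rw [show (2 : ℝ) = ((2 : ℕ) : ℝ) by norm_num, Real.rpow_natCast]; norm_num
    have hK2 : (0 : ℝ) ≤ K ^ (1 / 2 : ℝ) := Real.rpow_nonneg hK.le _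
    have hxr : (0 : ℝ) ≤ ((2 : ℝ) ^ n) ^ (3 / 2 : ℝ) := Real.rpow_nonneg hx _
    rw [hg n, hg (n + 1), hm]
    nlinarith [mul_le_mul_of_nonneg_right h23 (mul_nonneg hxr hK2)]
  obtain ⟨D, hD⟩ : ∃ D : ℝ, D = C₂ * max 1 (c ^ (-(3 : ℝ) / 2)) := ⟨_, rfl⟩
  have hmax1 : (1 : ℝ) ≤ max 1 (c ^ (-(3 : ℝ) / 2)) := le_max_left _ _
  have hD1 : 1 ≤ D := by rw [hD]; nlinarith
  have hrecD : ∀ n : ℤ,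
      C₂ * (1 + c ^ (-(3 : ℝ) / 2) * ((2 : ℝ) ^ n) ^ (3 / 2 : ℝ) * K ^ (1 / 2 : ℝ))
        ≤ D * g n := by
    intro n
    have ht := hterm n
    have hcmax : c ^ (-(3 : ℝ) / 2) ≤ max 1 (c ^ (-(3 : ℝ) / 2)) := le_max_right _ _
    have hcnn : (0 : ℝ) ≤ c ^ (-(3 : ℝ) / 2) := Real.rpow_nonneg hc.le _
    rw [hg n, hD]
    nlinarith [mul_le_mul_of_nonneg_left hcmax ht]
  obtain ⟨M, hM⟩ : ∃ M : ℝ, M = 4 * D + C₁ := ⟨_, rfl⟩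
  have hM0 : 0 ≤ M := by rw [hM]; nlinarith
  have hη1 : η ≤ 1 := by linarith
  have hηsq : η ^ 2 * 4 ≤ 1 / 4 := by nlinarith
  -- one step of the descent
  have hstep : ∀ n : ℤ, A' (n + 1) ≤ M * g (n + 1) →
      A' n ≤ M * g n ∧ A n ≤ (D + M / 4) * g n := by
    intro n hn
    have hgp := hgpos n
    have hchain : η ^ 2 * A' (n + 1) ≤ (M / 4) * g n := by
      have h1 : η ^ 2 * A' (n + 1) ≤ η ^ 2 * (M * g (n + 1)) :=
        mul_le_mul_of_nonneg_left hn (by positivity)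
      have h2 : M * g (n + 1) ≤ M * (4 * g n) :=
        mul_le_mul_of_nonneg_left (hgsucc n) hM0
      have h3 : η ^ 2 * (M * (4 * g n)) ≤ (M / 4) * g n := by
        nlinarith [mul_le_mul_of_nonneg_right hηsq (mul_nonneg hM0 hgp.le)]
      have h4 := mul_le_mul_of_nonneg_left h2 (sq_nonneg η)
      exact h1.trans (h4.trans h3)
    have hAn : A n ≤ (D + M / 4) * g n := by
      have e1 := hrecA n
      have e2 := hrecD n
      linarith
    refine ⟨?_, hAn⟩
    have e1 := hrecA' n
    have e2 := hrecD n
    have hη' : η * A n ≤ (D + M / 4) * g n := by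
      have hAnn := hA0 n
      calc η * A n ≤ 1 * A n := mul_le_mul_of_nonneg_right hη1 hAnn
        _ = A n := one_mul _
        _ ≤ (D + M / 4) * g n := hAn
    -- A' n ≤ D g + (D + M/4) g + (M/4) g  ≤ M g since 2D + M/2 ≤ M
    have : A' n ≤ D * g n + (D + M / 4) * g n + (M / 4) * g n := by linarith
    have hMD : 2 * D + M / 2 ≤ M := by rw [hM]; linarith
    nlinarith [mul_le_mul_of_nonneg_right hMD hgp.le]
  -- the bound for A' by downward induction below N₀
  have hbase' : ∀ n : ℤ, N₀ ≤ n → A' n ≤ M * g n := by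
    intro n hn
    have h := hbase n hn
    have := hA0 n
    have ht := hterm n
    have : A' n ≤ C₁ * (((2 : ℝ) ^ n) ^ (3 / 2 : ℝ) * K ^ (1 / 2 : ℝ)) := by
      nlinarith
    have hC₁M : C₁ ≤ M := by rw [hM]; nlinarith
    have hgp := hgpos n
    have : A' n ≤ C₁ * g n := by rw [hg n]; nlinarith
    nlinarith [mul_le_mul_of_nonneg_right hC₁M hgp.le]
  have keyk : ∀ k : ℕ, A' (N₀ - k) ≤ M * g (N₀ - k) := by
    intro k
    induction k with
    | zero => simpa using hbase' N₀ le_rfl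
    | succ k ih =>
      have heq : (N₀ - (k + 1 : ℕ) : ℤ) + 1 = N₀ - k := by push_cast; ring
      exact (hstep _ (by rw [heq]; exact ih)).1
  have key : ∀ n : ℤ, A' n ≤ M * g n := by
    intro n
    by_cases hn : N₀ ≤ n
    · exact hbase' n hn
    · push_neg at hn
      have : n = N₀ - ((N₀ - n).toNat : ℤ) := by
        rw [Int.toNat_of_nonneg (by omega)]; ring
      rw [this]; exact keyk _
  refine ⟨D + M / 4 + M, ?_⟩
  intro n
  have hAn : A n ≤ (D + M / 4) * g n := (hstep n (key (n + 1))).2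
  have hA'n := key n
  rw [← hg n]
  linarith
end
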